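/- Let Δ, W, W_n, V, Ω, a, Θ, Θ' be complex numbers (with everything scalar), and let M be the 2×2 matrix [[Ω, -aΘ], [aΘ', -Ω - 2V]] and A = (1/W_n) M with W_n ≠ 0. Suppose W_n(W_n - W) = -(Δ²/4)·det M, and suppose W + ΔV ≠ 0 and the matrix I - (Δ/2)A is invertible. Then (I - (Δ/2)A)^{-1} (I + (Δ/2)A) = (1/(W + ΔV)) · [[2W_n - W + Δ(Ω + V), -Δ a Θ], [Δ a Θ', 2W_n - W - Δ(Ω + V)]]. -/

import Mathlib

open Matrix

set_option maxHeartbeats 1000000 in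
set_option linter.unreachableTactic false in
set_option linter.unusedTactic false in
/-- Evaluation of the Cayley transform of the spectral matrix `A = W_n⁻¹ M` with
`M = [[Ω, -aΘ], [aΘ', -Ω-2V]]`, under the bilinear relation
`W_n(W_n - W) = -(Δ²/4) det M`. -/
theorem cayley_transform_evaluation (Δ W Wn V Ω a Θ Θ' : ℂ) (hWn : Wn ≠ 0)
    (M : Matrix (Fin 2) (Fin 2) ℂ) (hM : M = !![Ω, -(a * Θ); a * Θ', -Ω - 2 * V])
    (A : Matrix (Fin 2) (Fin 2) ℂ) (hA : A = Wn⁻¹ • M)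
    (hdet : Wn * (Wn - W) = -(Δ ^ 2 / 4) * M.det)
    (hWV : W + Δ * V ≠ 0)
    (hinv : IsUnit (1 - (Δ / 2) • A)) :
    (1 - (Δ / 2) • A)⁻¹ * (1 + (Δ / 2) • A)
      = (W + Δ * V)⁻¹ •
          !![2 * Wn - W + Δ * (Ω + V), -(Δ * a * Θ);
             Δ * a * Θ', 2 * Wn - W - Δ * (Ω + V)] := by
  have h := hinv.invertible
  rw [Matrix.inv_mul_eq_iff_eq_mul_of_invertible]
  clear h hinv
  have hdet' : Wn * (Wn - W) = -(Δ ^ 2 / 4) * (Ω * (-Ω - 2*V) - (-(a*Θ)) * (a*Θ')) := by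
    rw [hdet, hM, Matrix.det_fin_two_of]
  subst hM hA
  ext i j
  fin_cases i <;> fin_cases j <;>
    simp [Matrix.mul_apply, Fin.sum_univ_two, Matrix.one_apply, Matrix.smul_apply,
      Matrix.sub_apply, Matrix.add_apply] <;>
    field_simp <;> ring_nf <;> first
      | linear_combination (-(8*Wn)) * hdet'
      | linear_combination (Δ^2) * hdet'
      | linear_combination (-(4+Δ^2)) * hdet'
      | linear_combination (-4) * hdet'
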